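/- Let μ be a Radon measure on ℝⁿ with μ(B_R(x)) ≤ D ω_{n−1} R^{n−1} for all x, R. For every δ > 0 there exists γ₁ > 0 depending only on n and δ such that for all x, x₀ ∈ ℝⁿ and r > 0 with |x − x₀| < γ₁ r, one has ∫ ρ_{x₀}^r dμ ≤ (1+δ) ∫ ρ_x^r dμ + δ D, where ρ_x^r(y) = (√(2π) r)^{−(n−1)} exp(−|y−x|²/(2r²)). -/

import Mathlib

open MeasureTheory

lemma summable_aux (m : ℕ) :
    Summable (fun k : ℕ => ((k : ℝ) + 1) ^ m * Real.exp (-(k : ℝ) ^ 2 / 2)) := by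
  have hlt : ‖Real.exp (-1)‖ < 1 := by
    rw [Real.norm_eq_abs, abs_of_pos (Real.exp_pos _)]
    exact Real.exp_lt_one_iff.mpr (by norm_num)
  have h1 : Summable (fun k : ℕ => (k : ℝ) ^ m * Real.exp (-1) ^ k) :=
    summable_pow_mul_geometric_of_norm_lt_one m hlt
  have h2 : Summable (fun k : ℕ => ((k : ℝ) + 1) ^ m * Real.exp (-1) ^ (k + 1)) := by
    have := (summable_nat_add_iff 1).mpr h1
    simpa [Nat.cast_add] using this
  have h3 : Summable (fun k : ℕ => Real.exp 1 * Real.exp (1/2) *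
      (((k : ℝ) + 1) ^ m * Real.exp (-1) ^ (k + 1))) := h2.mul_left _
  refine h3.of_nonneg_of_le (fun k => by positivity) (fun k => ?_)
  have hexp : Real.exp (-(k : ℝ) ^ 2 / 2) ≤ Real.exp 1 * Real.exp (1/2) * Real.exp (-1) ^ (k+1) := by
    rw [← Real.exp_nat_mul, ← Real.exp_add, ← Real.exp_add]
    apply Real.exp_le_exp.mpr
    push_cast
    nlinarith [sq_nonneg ((k : ℝ) - 1)]
  calc ((k : ℝ) + 1) ^ m * Real.exp (-(k : ℝ) ^ 2 / 2)
      ≤ ((k : ℝ) + 1) ^ m * (Real.exp 1 * Real.exp (1/2) * Real.exp (-1) ^ (k+1)) :=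
        mul_le_mul_of_nonneg_left hexp (by positivity)
    _ = Real.exp 1 * Real.exp (1/2) * (((k : ℝ) + 1) ^ m * Real.exp (-1) ^ (k + 1)) := by ring


lemma tail_bound (n : ℕ) (μ : Measure (EuclideanSpace ℝ (Fin n)))
    (D ω : ℝ) (hD : 0 ≤ D) (hω : 0 ≤ ω)
    (hμ : ∀ (x : EuclideanSpace ℝ (Fin n)) (R : ℝ), 0 < R →
      μ (Metric.ball x R) ≤ ENNReal.ofReal (D * ω * R ^ (n - 1)))
    (z : EuclideanSpace ℝ (Fin n)) (r : ℝ) (hr : 0 < r) (L : ℕ) :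
    ∫⁻ y in (Metric.ball z ((L : ℝ) * r))ᶜ,
        ENNReal.ofReal (((Real.sqrt (2 * Real.pi) * r) ^ (n - 1))⁻¹ *
          Real.exp (-‖y - z‖ ^ 2 / (2 * r ^ 2))) ∂μ ≤
      ∑' k : ℕ, ENNReal.ofReal (D * ω *
        ((((k + L : ℕ) : ℝ) + 1) ^ (n - 1) * Real.exp (-((k + L : ℕ) : ℝ) ^ 2 / 2))) := by
  set m := n - 1
  set c : ℝ := ((Real.sqrt (2 * Real.pi) * r) ^ m)⁻¹ with hcdef
  have hsqrt : (1 : ℝ) ≤ Real.sqrt (2 * Real.pi) := by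
    rw [show (1:ℝ) = Real.sqrt 1 by simp]
    exact Real.sqrt_le_sqrt (by nlinarith [Real.pi_gt_three])
  have hc : 0 ≤ c := by positivity
  set S : ℕ → Set (EuclideanSpace ℝ (Fin n)) := fun k =>
    Metric.ball z ((((k + L : ℕ) : ℝ) + 1) * r) \ Metric.ball z (((k + L : ℕ) : ℝ) * r) with hSdef
  have hcover : (Metric.ball z ((L : ℝ) * r))ᶜ ⊆ ⋃ k, S k := by
    intro y hy
    have hyd : (L : ℝ) * r ≤ dist y z := by
      simpa [Metric.mem_ball, not_lt] using hy
    have hd0 : 0 ≤ dist y z := dist_nonneg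
    set q : ℕ := ⌊dist y z / r⌋₊ with hq
    have hqL : L ≤ q := Nat.le_floor (by rw [le_div_iff₀ hr]; linarith)
    refine Set.mem_iUnion.2 ⟨q - L, ?_⟩
    have hk : ((q - L : ℕ) + L : ℕ) = q := by omega
    simp only [hSdef, Set.mem_diff, Metric.mem_ball, hk, not_lt]
    constructor
    · have h := Nat.lt_floor_add_one (dist y z / r)
      rw [div_lt_iff₀ hr] at h
      rw [← hq] at h
      exact h
    · have h : (q : ℝ) ≤ dist y z / r := Nat.floor_le (div_nonneg hd0 hr.le)
      rw [le_div_iff₀ hr] at h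
      exact h
  have hmeas : ∀ k : ℕ, MeasurableSet (S k) := fun k =>
    (measurableSet_ball).diff measurableSet_ball
  calc ∫⁻ y in (Metric.ball z ((L : ℝ) * r))ᶜ,
        ENNReal.ofReal (c * Real.exp (-‖y - z‖ ^ 2 / (2 * r ^ 2))) ∂μ
      ≤ ∫⁻ y in ⋃ k, S k,
        ENNReal.ofReal (c * Real.exp (-‖y - z‖ ^ 2 / (2 * r ^ 2))) ∂μ :=
        lintegral_mono_set hcover
    _ ≤ ∑' k : ℕ, ∫⁻ y in S k,
        ENNReal.ofReal (c * Real.exp (-‖y - z‖ ^ 2 / (2 * r ^ 2))) ∂μ :=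
        lintegral_iUnion_le _ _
    _ ≤ ∑' k : ℕ, ENNReal.ofReal (D * ω *
        ((((k + L : ℕ) : ℝ) + 1) ^ m * Real.exp (-((k + L : ℕ) : ℝ) ^ 2 / 2))) := by
        refine ENNReal.tsum_le_tsum fun k => ?_
        set a : ℝ := ((k + L : ℕ) : ℝ) with ha
        have ha0 : 0 ≤ a := Nat.cast_nonneg _
        have step1 : ∫⁻ y in S k,
            ENNReal.ofReal (c * Real.exp (-‖y - z‖ ^ 2 / (2 * r ^ 2))) ∂μ ≤
            ∫⁻ _ in S k, ENNReal.ofReal (c * Real.exp (-a ^ 2 / 2)) ∂μ := by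
          refine setLIntegral_mono measurable_const fun y hy => ?_
          have hyd : a * r ≤ dist y z := by
            have h2 := hy.2
            rw [ha]
            push_cast
            simpa [Metric.mem_ball, not_lt] using h2
          refine ENNReal.ofReal_le_ofReal (mul_le_mul_of_nonneg_left ?_ hc)
          apply Real.exp_le_exp.mpr
          rw [div_le_div_iff₀ (by positivity) (by norm_num)]
          have h1 : (a * r) ^ 2 ≤ ‖y - z‖ ^ 2 := by
            rw [← dist_eq_norm]
            exact pow_le_pow_left₀ (by positivity) hyd 2
          nlinarith [sq_nonneg r]
        have step2 : ∫⁻ _ in S k, ENNReal.ofReal (c * Real.exp (-a ^ 2 / 2)) ∂μ =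
            ENNReal.ofReal (c * Real.exp (-a ^ 2 / 2)) * μ (S k) :=
          setLIntegral_const _ _
        have step3 : μ (S k) ≤ ENNReal.ofReal (D * ω * ((a + 1) * r) ^ m) := by
          refine le_trans (measure_mono Set.diff_subset) ?_
          exact hμ z ((a + 1) * r) (by positivity)
        refine le_trans step1 ?_
        rw [step2]
        refine le_trans (mul_le_mul_right step3 _) ?_
        rw [← ENNReal.ofReal_mul (by positivity)]
        refine ENNReal.ofReal_le_ofReal ?_
        have hkey : c * ((a + 1) * r) ^ m ≤ (a + 1) ^ m := by
          have hs : (1:ℝ) ≤ Real.sqrt (2 * Real.pi) ^ m := one_le_pow₀ hsqrt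
          have heq : c * ((a + 1) * r) ^ m = (a + 1) ^ m / Real.sqrt (2 * Real.pi) ^ m := by
            rw [hcdef, mul_pow ((a + 1)) r, mul_pow]
            rw [mul_inv, div_eq_mul_inv, mul_comm ((a+1)^m) (r^m), ← mul_assoc]
            rw [mul_assoc ((Real.sqrt (2*Real.pi) ^ m)⁻¹), inv_mul_cancel₀ (by positivity : (r:ℝ)^m ≠ 0)]
            ring
          rw [heq]
          exact div_le_self (by positivity) hs
        calc c * Real.exp (-a ^ 2 / 2) * (D * ω * ((a + 1) * r) ^ m)
            = D * ω * (c * ((a + 1) * r) ^ m) * Real.exp (-a ^ 2 / 2) := by ring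
          _ ≤ D * ω * (a + 1) ^ m * Real.exp (-a ^ 2 / 2) := by
              refine mul_le_mul_of_nonneg_right ?_ (Real.exp_pos _).le
              rw [mul_assoc, mul_assoc]
              exact mul_le_mul_of_nonneg_left
                (mul_le_mul_of_nonneg_left hkey hω) hD
          _ = D * ω * ((a + 1) ^ m * Real.exp (-a ^ 2 / 2)) := by ring


set_option maxHeartbeats 1000000 in
theorem gaussian_kernel_center_comparison
    (n : ℕ) (hn : 2 ≤ n) (δ : ℝ) (hδ : 0 < δ) :
    ∃ γ₁ > (0 : ℝ),
      ∀ (μ : Measure (EuclideanSpace ℝ (Fin n))), IsLocallyFiniteMeasure μ →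
        ∀ (D : ℝ), 0 < D →
        (∀ (x : EuclideanSpace ℝ (Fin n)) (R : ℝ), 0 < R →
          μ (Metric.ball x R) ≤ ENNReal.ofReal
            (D * (volume (Metric.ball (0 : EuclideanSpace ℝ (Fin (n - 1))) 1)).toReal *
              R ^ (n - 1))) →
        ∀ (x x₀ : EuclideanSpace ℝ (Fin n)) (r : ℝ), 0 < r → ‖x - x₀‖ < γ₁ * r →
          ∫⁻ y, ENNReal.ofReal
              (((Real.sqrt (2 * Real.pi) * r) ^ (n - 1))⁻¹ *
                Real.exp (-‖y - x₀‖ ^ 2 / (2 * r ^ 2))) ∂μ ≤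
            ENNReal.ofReal (1 + δ) *
              ∫⁻ y, ENNReal.ofReal
                (((Real.sqrt (2 * Real.pi) * r) ^ (n - 1))⁻¹ *
                  Real.exp (-‖y - x‖ ^ 2 / (2 * r ^ 2))) ∂μ +
              ENNReal.ofReal (δ * D) := by
  classical
  set m : ℕ := n - 1 with hm
  set ω : ℝ := (volume (Metric.ball (0 : EuclideanSpace ℝ (Fin (n - 1))) 1)).toReal with hωdef
  have hω : 0 < ω := by
    apply ENNReal.toReal_pos
    · exact (Metric.measure_ball_pos _ _ one_pos).ne'
    · exact measure_ball_lt_top.ne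
  set f : ℕ → ℝ := fun k => ((k : ℝ) + 1) ^ m * Real.exp (-(k : ℝ) ^ 2 / 2) with hfdef
  have hf : Summable f := summable_aux m
  have htail : Filter.Tendsto (fun i => ∑' k, f (k + i)) Filter.atTop (nhds 0) :=
    tendsto_sum_nat_add f
  have hev : ∀ᶠ i in Filter.atTop, ∑' k, f (k + i) < δ / ω :=
    htail.eventually (gt_mem_nhds (by positivity))
  obtain ⟨L, hL⟩ := Filter.eventually_atTop.mp hev
  have hTlt : ∑' k, f (k + L) < δ / ω := hL L le_rfl
  have hlog : 0 < Real.log (1 + δ) := Real.log_pos (by linarith)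
  set γ₁ : ℝ := min 1 (Real.log (1 + δ) / ((L : ℝ) + 1)) with hγdef
  have hγpos : 0 < γ₁ := lt_min one_pos (by positivity)
  have hγ1 : γ₁ ≤ 1 := min_le_left _ _
  have hγ2 : γ₁ * ((L : ℝ) + 1) ≤ Real.log (1 + δ) := by
    rw [← le_div_iff₀ (by positivity : (0:ℝ) < (L : ℝ) + 1)]
    exact min_le_right _ _
  refine ⟨γ₁, hγpos, ?_⟩
  intro μ _ D hD hμ x x₀ r hr hxx
  set c : ℝ := ((Real.sqrt (2 * Real.pi) * r) ^ m)⁻¹ with hcdef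
  have hc : 0 ≤ c := by positivity
  have hmeasg : ∀ z : EuclideanSpace ℝ (Fin n),
      Measurable fun y : EuclideanSpace ℝ (Fin n) =>
        ENNReal.ofReal (c * Real.exp (-‖y - z‖ ^ 2 / (2 * r ^ 2))) := by
    intro z
    apply Measurable.ennreal_ofReal
    fun_prop
  set T : Set (EuclideanSpace ℝ (Fin n)) := (Metric.ball x₀ ((L : ℝ) * r))ᶜ with hTdef
  have hTmeas : MeasurableSet T := measurableSet_ball.compl
  have hpt : ∀ y, ENNReal.ofReal (c * Real.exp (-‖y - x₀‖ ^ 2 / (2 * r ^ 2))) ≤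
      ENNReal.ofReal (1 + δ) * ENNReal.ofReal (c * Real.exp (-‖y - x‖ ^ 2 / (2 * r ^ 2))) +
      T.indicator (fun y => ENNReal.ofReal (c * Real.exp (-‖y - x₀‖ ^ 2 / (2 * r ^ 2)))) y := by
    intro y
    set a : ℝ := ‖y - x‖ with ha
    set b : ℝ := ‖y - x₀‖ with hb
    set e : ℝ := ‖x - x₀‖ with he
    have ha0 : 0 ≤ a := norm_nonneg _
    have hb0 : 0 ≤ b := norm_nonneg _
    have he0 : 0 ≤ e := norm_nonneg _
    have habc : a ≤ b + e := by
      calc a = ‖(y - x₀) + (x₀ - x)‖ := by rw [ha, sub_add_sub_cancel]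
        _ ≤ ‖y - x₀‖ + ‖x₀ - x‖ := norm_add_le _ _
        _ = b + e := by rw [norm_sub_rev x₀ x]
    have hkey : a ^ 2 - b ^ 2 ≤ 2 * a * e := by
      rcases le_or_gt e a with h | h
      · nlinarith [sq_nonneg (a - e - b)]
      · nlinarith
    rcases le_or_gt a (((L : ℝ) + 1) * r) with hcase | hcase
    · refine le_trans ?_ le_self_add
      rw [← ENNReal.ofReal_mul (by linarith)]
      refine ENNReal.ofReal_le_ofReal ?_
      rw [show (1 + δ) * (c * Real.exp (-a ^ 2 / (2 * r ^ 2))) =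
        c * ((1 + δ) * Real.exp (-a ^ 2 / (2 * r ^ 2))) by ring]
      refine mul_le_mul_of_nonneg_left ?_ hc
      rw [show (1 + δ : ℝ) = Real.exp (Real.log (1 + δ)) by
        rw [Real.exp_log (by linarith)]]
      rw [← Real.exp_add]
      apply Real.exp_le_exp.mpr
      have hr2 : (0:ℝ) < 2 * r ^ 2 := by positivity
      have h1 : a * e ≤ (((L : ℝ) + 1) * r) * (γ₁ * r) :=
        mul_le_mul hcase (le_of_lt hxx) he0 (by positivity)
      have h2 : γ₁ * ((L : ℝ) + 1) * r ^ 2 ≤ Real.log (1 + δ) * r ^ 2 :=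
        mul_le_mul_of_nonneg_right hγ2 (by positivity)
      have key : a ^ 2 - b ^ 2 ≤ 2 * r ^ 2 * Real.log (1 + δ) := by nlinarith
      have hfin : -b ^ 2 / (2 * r ^ 2) - (-a ^ 2 / (2 * r ^ 2)) ≤ Real.log (1 + δ) := by
        rw [div_sub_div_same, show -b ^ 2 - -a ^ 2 = a ^ 2 - b ^ 2 by ring,
          div_le_iff₀ hr2]
        linarith
      linarith
    · refine le_trans ?_ le_add_self
      have hmem : y ∈ T := by
        simp only [hTdef, Set.mem_compl_iff, Metric.mem_ball, not_lt]
        have hdist : dist y x₀ = b := by rw [hb, dist_eq_norm]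
        rw [hdist]
        have : b ≥ a - e := by linarith
        have h3 : e ≤ γ₁ * r := le_of_lt hxx
        have h4 : γ₁ * r ≤ r := by
          nlinarith
        nlinarith
      rw [Set.indicator_of_mem hmem]
  calc ∫⁻ y, ENNReal.ofReal (c * Real.exp (-‖y - x₀‖ ^ 2 / (2 * r ^ 2))) ∂μ
      ≤ ∫⁻ y, (ENNReal.ofReal (1 + δ) *
          ENNReal.ofReal (c * Real.exp (-‖y - x‖ ^ 2 / (2 * r ^ 2))) +
          T.indicator (fun y => ENNReal.ofReal (c * Real.exp (-‖y - x₀‖ ^ 2 / (2 * r ^ 2)))) y) ∂μ :=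
        lintegral_mono hpt
    _ = ENNReal.ofReal (1 + δ) * ∫⁻ y, ENNReal.ofReal (c * Real.exp (-‖y - x‖ ^ 2 / (2 * r ^ 2))) ∂μ +
        ∫⁻ y in T, ENNReal.ofReal (c * Real.exp (-‖y - x₀‖ ^ 2 / (2 * r ^ 2))) ∂μ := by
        rw [lintegral_add_left ((hmeasg x).const_mul _), lintegral_const_mul _ (hmeasg x),
          lintegral_indicator hTmeas]
    _ ≤ ENNReal.ofReal (1 + δ) * ∫⁻ y, ENNReal.ofReal (c * Real.exp (-‖y - x‖ ^ 2 / (2 * r ^ 2))) ∂μ +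
        ENNReal.ofReal (δ * D) := by
        refine add_le_add le_rfl ?_
        have htb := tail_bound n μ D ω hD.le hω.le hμ x₀ r hr L
        refine le_trans htb ?_
        have hsum : Summable (fun k : ℕ => D * ω * f (k + L)) :=
          ((summable_nat_add_iff L).mpr hf).mul_left (D * ω)
        have heq : ∀ k : ℕ, D * ω *
            ((((k + L : ℕ) : ℝ) + 1) ^ (n - 1) * Real.exp (-((k + L : ℕ) : ℝ) ^ 2 / 2)) =
            D * ω * f (k + L) := by
          intro k
          rw [hfdef]
        calc ∑' k : ℕ, ENNReal.ofReal (D * ω *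
              ((((k + L : ℕ) : ℝ) + 1) ^ (n - 1) * Real.exp (-((k + L : ℕ) : ℝ) ^ 2 / 2)))
            = ∑' k : ℕ, ENNReal.ofReal (D * ω * f (k + L)) := by
              exact tsum_congr fun k => by rw [heq k]
          _ = ENNReal.ofReal (∑' k : ℕ, D * ω * f (k + L)) :=
              (ENNReal.ofReal_tsum_of_nonneg (fun k => by positivity) hsum).symm
          _ ≤ ENNReal.ofReal (δ * D) := by
              refine ENNReal.ofReal_le_ofReal ?_
              rw [tsum_mul_left]
              calc D * ω * ∑' k, f (k + L) ≤ D * ω * (δ / ω) := by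
                    refine mul_le_mul_of_nonneg_left hTlt.le (by positivity)
                _ = δ * D := by field_simp
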